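/- Let ε ≥ 0 and Δ > 0. Let i ≤ 0 and 0 ≤ r < Δ be real numbers, and let a, b, m be real numbers satisfying |a − Φ⁺(i)| ≤ ε, |b − (Φ⁺)'(i)| ≤ ε, and |m − r·b| ≤ ε. Then the fixed-point first-order Taylor approximation a − m of Φ⁺(i − r) satisfies |Φ⁺(i − r) − (a − m)| ≤ E⁺(0, Δ) + (2 + Δ)·ε. -/

import Mathlib

/-- Φ⁺(x) = log₂(1 + 2^x) -/
noncomputable def Phip (x : ℝ) : ℝ := Real.logb 2 (1 + (2:ℝ) ^ x)

/-- (Φ⁺)'(x) = 2^x / (2^x + 1) -/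
noncomputable def dPhip (x : ℝ) : ℝ := (2:ℝ) ^ x / ((2:ℝ) ^ x + 1)

/-- First-order Taylor remainder E⁺(i, r) = Φ⁺(i − r) − Φ⁺(i) + r·(Φ⁺)'(i) -/
noncomputable def Ep (i r : ℝ) : ℝ := Phip (i - r) - Phip i + r * dPhip i

noncomputable def d2 (x : ℝ) : ℝ := Real.log 2 * (2:ℝ) ^ x / ((2:ℝ) ^ x + 1) ^ 2

lemma rpow_pos (x : ℝ) : (0:ℝ) < (2:ℝ) ^ x := Real.rpow_pos_of_pos two_pos x

lemma hasDerivAt_two_rpow (x : ℝ) :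
    HasDerivAt (fun y : ℝ => (2:ℝ) ^ y) ((2:ℝ) ^ x * Real.log 2) x :=
  (Real.hasStrictDerivAt_const_rpow two_pos x).hasDerivAt

lemma hasDerivAt_Phip (x : ℝ) : HasDerivAt Phip (dPhip x) x := by
  have h1 := (hasDerivAt_two_rpow x).const_add 1
  have hpos : (0:ℝ) < 1 + (2:ℝ) ^ x := by positivity
  have h2 := (h1.log hpos.ne').div_const (Real.log 2)
  have hl2 : Real.log 2 ≠ 0 := ne_of_gt (Real.log_pos (by norm_num))
  unfold Phip Real.logb
  refine h2.congr_deriv ?_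
  unfold dPhip
  field_simp
  ring

lemma hasDerivAt_dPhip (x : ℝ) : HasDerivAt dPhip (d2 x) x := by
  have h1 := hasDerivAt_two_rpow x
  have h2 := h1.add_const 1
  have hne : (2:ℝ) ^ x + 1 ≠ 0 := by positivity
  have h3 := h1.div h2 hne
  refine h3.congr_deriv ?_
  unfold d2
  field_simp
  ring

lemma dPhip_mono : Monotone dPhip := by
  intro x y hxy
  have hx := rpow_pos x
  have hy := rpow_pos y
  have h : (2:ℝ) ^ x ≤ (2:ℝ) ^ y :=
    Real.rpow_le_rpow_of_exponent_le (by norm_num) hxy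
  unfold dPhip
  rw [div_le_div_iff₀ (by positivity) (by positivity)]
  nlinarith

lemma d2_monoOn {x y : ℝ} (hxy : x ≤ y) (hy : y ≤ 0) : d2 x ≤ d2 y := by
  have hx := rpow_pos x
  have hyp := rpow_pos y
  have h : (2:ℝ) ^ x ≤ (2:ℝ) ^ y :=
    Real.rpow_le_rpow_of_exponent_le (by norm_num) hxy
  have hy1 : (2:ℝ) ^ y ≤ 1 := by
    calc (2:ℝ) ^ y ≤ (2:ℝ) ^ (0:ℝ) := Real.rpow_le_rpow_of_exponent_le (by norm_num) hy
    _ = 1 := Real.rpow_zero 2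
  have hl2 : 0 < Real.log 2 := Real.log_pos (by norm_num)
  unfold d2
  rw [div_le_div_iff₀ (by positivity) (by positivity)]
  have huv : (2:ℝ)^x * (2:ℝ)^y ≤ 1 := by nlinarith
  have key : (2:ℝ)^x * ((2:ℝ)^y + 1)^2 ≤ (2:ℝ)^y * ((2:ℝ)^x + 1)^2 := by nlinarith
  nlinarith

/-- For fixed `i`, `s ↦ Ep i s` is monotone on `[0, ∞)`. -/
lemma Ep_mono_r (i : ℝ) : MonotoneOn (fun s => Ep i s) (Set.Ici (0:ℝ)) := by
  have hd : ∀ s : ℝ, HasDerivAt (fun s => Ep i s) (-dPhip (i - s) + dPhip i) s := by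
    intro s
    have h1 : HasDerivAt (fun s : ℝ => i - s) (-1) s := by
      simpa using (hasDerivAt_id s).const_sub i
    have h2 := (hasDerivAt_Phip (i - s)).comp s h1
    have h3 : HasDerivAt (fun s : ℝ => s * dPhip i) (dPhip i) s := by
      simpa using (hasDerivAt_id s).mul_const (dPhip i)
    have := ((h2.sub_const (Phip i)).add h3)
    refine this.congr_deriv ?_
    ring
  apply monotoneOn_of_deriv_nonneg (convex_Ici 0)
  · exact fun s _ => ((hd s).differentiableAt.continuousAt).continuousWithinAt
  · intro s hs
    exact ((hd s).differentiableAt).differentiableWithinAt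
  · intro s hs
    rw [interior_Ici] at hs
    rw [(hd s).deriv]
    have : dPhip (i - s) ≤ dPhip i := dPhip_mono (by linarith [hs.out])
    linarith

/-- key: `dPhip x - dPhip (x - r) ≤ r * d2 x` for `x ≤ 0`, `r ≥ 0`. -/
lemma dPhip_diff_le (x r : ℝ) (hx : x ≤ 0) (hr : 0 ≤ r) :
    dPhip x - dPhip (x - r) ≤ r * d2 x := by
  have hd : ∀ s : ℝ, HasDerivAt (fun s => s * d2 x - dPhip x + dPhip (x - s))
      (d2 x - d2 (x - s)) s := by
    intro s
    have h1 : HasDerivAt (fun s : ℝ => x - s) (-1) s := by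
      simpa using (hasDerivAt_id s).const_sub x
    have h2 := (hasDerivAt_dPhip (x - s)).comp s h1
    have h3 : HasDerivAt (fun s : ℝ => s * d2 x) (d2 x) s := by
      simpa using (hasDerivAt_id s).mul_const (d2 x)
    have := (h3.sub_const (dPhip x)).add h2
    refine this.congr_deriv ?_
    ring
  have hmono : MonotoneOn (fun s => s * d2 x - dPhip x + dPhip (x - s)) (Set.Ici (0:ℝ)) := by
    apply monotoneOn_of_deriv_nonneg (convex_Ici 0)
    · exact fun s _ => ((hd s).differentiableAt.continuousAt).continuousWithinAt
    · exact fun s _ => ((hd s).differentiableAt).differentiableWithinAt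
    · intro s hs
      rw [interior_Ici] at hs
      rw [(hd s).deriv]
      have := d2_monoOn (show x - s ≤ x by linarith [hs.out]) hx
      linarith
  have h0 := hmono (Set.self_mem_Ici) (Set.mem_Ici.mpr hr) hr
  simp at h0
  linarith

/-- For fixed `r ≥ 0`, `x ↦ Ep x r` is monotone on `(-∞, 0]`. -/
lemma Ep_mono_i (r : ℝ) (hr : 0 ≤ r) : MonotoneOn (fun x => Ep x r) (Set.Iic (0:ℝ)) := by
  have hd : ∀ x : ℝ, HasDerivAt (fun x => Ep x r)
      (dPhip (x - r) - dPhip x + r * d2 x) x := by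
    intro x
    have h1 : HasDerivAt (fun x : ℝ => x - r) 1 x := by
      simpa using (hasDerivAt_id x).sub_const r
    have h2 := (hasDerivAt_Phip (x - r)).comp x h1
    have h3 := (hasDerivAt_dPhip x).const_mul r
    have := (h2.sub (hasDerivAt_Phip x)).add h3
    refine this.congr_deriv ?_
    ring
  apply monotoneOn_of_deriv_nonneg (convex_Iic 0)
  · exact fun x _ => ((hd x).differentiableAt.continuousAt).continuousWithinAt
  · exact fun x _ => ((hd x).differentiableAt).differentiableWithinAt
  · intro x hx
    rw [interior_Iic] at hx
    rw [(hd x).deriv]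
    have := dPhip_diff_le x r (le_of_lt hx.out) hr
    linarith

theorem stmt_3 (ε Δ : ℝ) (hε : 0 ≤ ε) (hΔ : 0 < Δ)
    (i r : ℝ) (hi : i ≤ 0) (hr0 : 0 ≤ r) (hrΔ : r < Δ)
    (a b m : ℝ)
    (ha : |a - Phip i| ≤ ε)
    (hb : |b - dPhip i| ≤ ε)
    (hm : |m - r * b| ≤ ε) :
    |Phip (i - r) - (a - m)| ≤ Ep 0 Δ + (2 + Δ) * ε := by
  have hEp0 : 0 ≤ Ep i r := by
    have := Ep_mono_r i (Set.self_mem_Ici) (Set.mem_Ici.mpr hr0) hr0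
    simpa [Ep] using this
  have hEp1 : Ep i r ≤ Ep 0 r := Ep_mono_i r hr0 (Set.mem_Iic.mpr hi) (Set.self_mem_Iic) hi
  have hEp2 : Ep 0 r ≤ Ep 0 Δ := Ep_mono_r 0 (Set.mem_Ici.mpr hr0) (Set.mem_Ici.mpr hΔ.le) hrΔ.le
  have hkey : Phip (i - r) - (a - m)
      = Ep i r + (Phip i - a) + (m - r * b) + r * (b - dPhip i) := by
    unfold Ep; ring
  have h1 : |Phip i - a| ≤ ε := by rwa [abs_sub_comm]
  have h2 : |r * (b - dPhip i)| ≤ Δ * ε := by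
    rw [abs_mul, abs_of_nonneg hr0]
    calc r * |b - dPhip i| ≤ Δ * |b - dPhip i| := by
          apply mul_le_mul_of_nonneg_right hrΔ.le (abs_nonneg _)
      _ ≤ Δ * ε := by apply mul_le_mul_of_nonneg_left hb hΔ.le
  rw [hkey]
  have t1 := abs_add_le (Ep i r + (Phip i - a) + (m - r * b)) (r * (b - dPhip i))
  have t2 := abs_add_le (Ep i r + (Phip i - a)) (m - r * b)
  have t3 := abs_add_le (Ep i r) (Phip i - a)
  have hE : |Ep i r| = Ep i r := abs_of_nonneg hEp0
  have hr2 : (2 + Δ) * ε = 2 * ε + Δ * ε := by ring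
  linarith
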